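/- arXiv:2103.15342 — 3 statements merged into one kernel-verified Lean document; each statement's English description precedes it below -/
import Mathlib

section
/- In the linear model f(Y) = X_S^T β_S + ε_S with ε_S centered, variance σ_S², and independent of X_S, condition on a full-rank design matrix Z_S ∈ ℝ^{m×(s+1)} from exploration, so that the least-squares estimator satisfies β̂_S = β_S + (Z_S^T Z_S)^{-1} Z_S^T η_S, where η_S ∈ ℝ^m has centered components with E[η_S η_S^T] = σ_S² I_m. Then averaging the conditional mean-squared error MSE_S|β̂_S = (x_S^T(β̂_S − β_S))² + (1/N_S) β̂_S^T Σ_S β̂_S over the noise η_S yields E_{η_S}[MSE_S|β̂_S] = (1/N_S)[β_S^T Σ_S β_S + σ_S² tr(Σ_S (Z_S^T Z_S)^{-1})] + σ_S² tr(x_S x_S^T (Z_S^T Z_S)^{-1}). -/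
open MeasureTheory ProbabilityTheory Matrix

private lemma mul_int {Ω : Type*} [MeasureSpace Ω] {f g : Ω → ℝ}
    (hf : MemLp f 2 (ℙ : Measure Ω)) (hg : MemLp g 2 (ℙ : Measure Ω)) :
    Integrable (fun ω => f ω * g ω) (ℙ : Measure Ω) := by
  rw [← memLp_one_iff_integrable]
  have h := hg.smul hf (r := 1)
  simpa [smul_eq_mul, Pi.mul_def] using h

private lemma sq_dot_eq {m : ℕ} (a y : Fin m → ℝ) :
    (a ⬝ᵥ y)^2 = y ⬝ᵥ (vecMulVec a a *ᵥ y) := by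
  simp only [dotProduct, mulVec, vecMulVec_apply, sq, Finset.sum_mul, Finset.mul_sum]
  rw [Finset.sum_comm]
  exact Finset.sum_congr rfl fun i _ => Finset.sum_congr rfl fun j _ => by ring

private lemma trace_vecMulVec_mul {n : Type*} [Fintype n] (x : n → ℝ) (B : Matrix n n ℝ) :
    Matrix.trace (vecMulVec x x * B) = (x ᵥ* B) ⬝ᵥ x := by
  simp only [Matrix.trace, Matrix.diag, Matrix.mul_apply, vecMulVec_apply, vecMul, dotProduct,
    Finset.sum_mul]
  exact Finset.sum_congr rfl fun i _ => Finset.sum_congr rfl fun j _ => by ring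

private lemma int_linear {Ω : Type*} [MeasureSpace Ω] [IsFiniteMeasure (ℙ : Measure Ω)] {m : ℕ}
    (η : Ω → Fin m → ℝ)
    (hηL2 : ∀ i, MemLp (fun ω => η ω i) 2 (ℙ : Measure Ω))
    (hηcent : ∀ i, ∫ ω, η ω i ∂(ℙ : Measure Ω) = 0)
    (d : Fin m → ℝ) :
    ∫ ω, d ⬝ᵥ η ω ∂(ℙ : Measure Ω) = 0 := by
  have h1 : ∀ ω, d ⬝ᵥ η ω = ∑ i, d i * η ω i := fun ω => rfl
  simp only [h1]
  rw [integral_finset_sum _ (fun i _ => ((hηL2 i).integrable one_le_two).const_mul (d i))]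
  simp [integral_const_mul, hηcent]

private lemma quad_expand {Ω : Type*} {m : ℕ} (η : Ω → Fin m → ℝ)
    (C : Matrix (Fin m) (Fin m) ℝ) (ω : Ω) :
    η ω ⬝ᵥ (C *ᵥ η ω) = ∑ p : Fin m × Fin m, C p.1 p.2 * (η ω p.1 * η ω p.2) := by
  rw [Fintype.sum_prod_type]
  simp only [dotProduct, mulVec, dotProduct, Finset.mul_sum]
  exact Finset.sum_congr rfl fun i _ => Finset.sum_congr rfl fun j _ => by ring

private lemma int_quad {Ω : Type*} [MeasureSpace Ω] {m : ℕ} {σ2 : ℝ}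
    (η : Ω → Fin m → ℝ)
    (hηL2 : ∀ i, MemLp (fun ω => η ω i) 2 (ℙ : Measure Ω))
    (hηcov : ∀ i j, ∫ ω, η ω i * η ω j ∂(ℙ : Measure Ω)
        = σ2 * (if i = j then (1 : ℝ) else 0))
    (C : Matrix (Fin m) (Fin m) ℝ) :
    ∫ ω, η ω ⬝ᵥ (C *ᵥ η ω) ∂(ℙ : Measure Ω) = σ2 * Matrix.trace C := by
  simp only [quad_expand η C]
  rw [integral_finset_sum _ (fun p _ => (mul_int (hηL2 p.1) (hηL2 p.2)).const_mul _)]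
  have h2 : ∀ p : Fin m × Fin m, ∫ ω, C p.1 p.2 * (η ω p.1 * η ω p.2) ∂(ℙ : Measure Ω)
      = C p.1 p.2 * (σ2 * (if p.1 = p.2 then (1:ℝ) else 0)) := by
    intro p; rw [integral_const_mul, hηcov]
  simp only [h2]
  rw [Fintype.sum_prod_type]
  simp only [mul_ite, mul_one, mul_zero, Finset.sum_ite_eq, Finset.mem_univ, if_true]
  rw [Matrix.trace, Finset.mul_sum]
  exact Finset.sum_congr rfl fun i _ => by rw [Matrix.diag_apply]; ring

private lemma int_quad_integrable {Ω : Type*} [MeasureSpace Ω] {m : ℕ}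
    (η : Ω → Fin m → ℝ)
    (hηL2 : ∀ i, MemLp (fun ω => η ω i) 2 (ℙ : Measure Ω))
    (C : Matrix (Fin m) (Fin m) ℝ) :
    Integrable (fun ω => η ω ⬝ᵥ (C *ᵥ η ω)) (ℙ : Measure Ω) := by
  simp only [quad_expand η C]
  exact integrable_finset_sum _ (fun p _ => (mul_int (hηL2 p.1) (hηL2 p.2)).const_mul _)

private lemma int_linear_integrable {Ω : Type*} [MeasureSpace Ω] [IsFiniteMeasure (ℙ : Measure Ω)] {m : ℕ}
    (η : Ω → Fin m → ℝ)
    (hηL2 : ∀ i, MemLp (fun ω => η ω i) 2 (ℙ : Measure Ω))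
    (d : Fin m → ℝ) :
    Integrable (fun ω => d ⬝ᵥ η ω) (ℙ : Measure Ω) := by
  have h1 : ∀ ω, d ⬝ᵥ η ω = ∑ i, d i * η ω i := fun ω => rfl
  simp only [h1]
  exact integrable_finset_sum _ (fun i _ => ((hηL2 i).integrable one_le_two).const_mul (d i))

/-- Averaging the conditional MSE of the LRMC estimator over the exploration noise:
conditioned on a full-rank design matrix `Z`, the least-squares estimator is
`β̂ = β + (ZᵀZ)⁻¹ Zᵀ η` with `η` centered and `E[ηηᵀ] = σ² I_m`, and averaging
`MSE_S|β̂ = (xᵀ(β̂−β))² + (1/N) β̂ᵀΣβ̂` over `η` gives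
`(1/N)[βᵀΣβ + σ² tr(Σ(ZᵀZ)⁻¹)] + σ² tr(x xᵀ (ZᵀZ)⁻¹)`. -/
theorem lrmc_average_conditional_mse
    {Ω : Type*} [MeasureSpace Ω] [IsProbabilityMeasure (ℙ : Measure Ω)]
    (s m N : ℕ) (hN : 0 < N)
    (x β : Fin (s + 1) → ℝ) (Sg : Matrix (Fin (s + 1)) (Fin (s + 1)) ℝ) (σ2 : ℝ)
    (Z : Matrix (Fin m) (Fin (s + 1)) ℝ) (hZ : IsUnit (Zᵀ * Z))
    (η : Ω → Fin m → ℝ) (hηmeas : Measurable η)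
    (hηL2 : ∀ i, MemLp (fun ω => η ω i) 2 (ℙ : Measure Ω))
    (hηcent : ∀ i, ∫ ω, η ω i ∂(ℙ : Measure Ω) = 0)
    (hηcov : ∀ i j, ∫ ω, η ω i * η ω j ∂(ℙ : Measure Ω)
        = σ2 * (if i = j then (1 : ℝ) else 0))
    (βhat : Ω → Fin (s + 1) → ℝ)
    (hβhat : ∀ ω, βhat ω = β + (Zᵀ * Z)⁻¹ *ᵥ (Zᵀ *ᵥ η ω)) :
    ∫ ω, ((x ⬝ᵥ (βhat ω - β)) ^ 2 + (N : ℝ)⁻¹ * (βhat ω ⬝ᵥ Sg.mulVec (βhat ω)))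
        ∂(ℙ : Measure Ω)
      = (N : ℝ)⁻¹ * (β ⬝ᵥ Sg.mulVec β + σ2 * Matrix.trace (Sg * (Zᵀ * Z)⁻¹))
        + σ2 * Matrix.trace (Matrix.vecMulVec x x * (Zᵀ * Z)⁻¹) := by
  have hdet : IsUnit (Zᵀ * Z).det := (Matrix.isUnit_iff_isUnit_det _).mp hZ
  set G : Matrix (Fin (s+1)) (Fin (s+1)) ℝ := (Zᵀ * Z)⁻¹ with hG
  set A : Matrix (Fin (s+1)) (Fin m) ℝ := G * Zᵀ with hA
  have hGsymm : Gᵀ = G := by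
    rw [hG, Matrix.transpose_nonsing_inv, Matrix.transpose_mul, Matrix.transpose_transpose]
  have hAT : Aᵀ = Z * G := by
    rw [hA, Matrix.transpose_mul, Matrix.transpose_transpose, hGsymm]
  have hAA : A * Aᵀ = G := by
    rw [hAT, hA, Matrix.mul_assoc, ← Matrix.mul_assoc Zᵀ Z G, hG,
      Matrix.mul_nonsing_inv _ hdet, Matrix.mul_one]
  set a : Fin m → ℝ := x ᵥ* A with ha
  set M : Matrix (Fin m) (Fin m) ℝ := Aᵀ * Sg * A with hM
  set b : Fin m → ℝ := β ᵥ* (Sg * A) with hb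
  set c : Fin m → ℝ := (Sg *ᵥ β) ᵥ* A with hc
  set C : Matrix (Fin m) (Fin m) ℝ := vecMulVec a a + (N : ℝ)⁻¹ • M with hC
  set d : Fin m → ℝ := (N : ℝ)⁻¹ • (b + c) with hd
  set e : ℝ := (N : ℝ)⁻¹ * (β ⬝ᵥ Sg *ᵥ β) with he
  -- pointwise identity
  have key : ∀ ω, (x ⬝ᵥ (βhat ω - β)) ^ 2 + (N : ℝ)⁻¹ * (βhat ω ⬝ᵥ Sg.mulVec (βhat ω))
      = η ω ⬝ᵥ (C *ᵥ η ω) + d ⬝ᵥ η ω + e := by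
    intro ω
    have hv : βhat ω - β = A *ᵥ η ω := by
      rw [hβhat ω, add_sub_cancel_left, hA, ← Matrix.mulVec_mulVec]
    have hβv : βhat ω = β + A *ᵥ η ω := by rw [← hv]; abel
    have e1 : x ⬝ᵥ (A *ᵥ η ω) = a ⬝ᵥ η ω := by rw [Matrix.dotProduct_mulVec, ha]
    have e3 : β ⬝ᵥ (Sg *ᵥ (A *ᵥ η ω)) = b ⬝ᵥ η ω := by
      rw [Matrix.mulVec_mulVec, Matrix.dotProduct_mulVec, hb]
    have e4 : (A *ᵥ η ω) ⬝ᵥ (Sg *ᵥ β) = c ⬝ᵥ η ω := by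
      rw [dotProduct_comm, Matrix.dotProduct_mulVec, hc]
    have e5 : (A *ᵥ η ω) ⬝ᵥ (Sg *ᵥ (A *ᵥ η ω)) = η ω ⬝ᵥ (M *ᵥ η ω) := by
      rw [Matrix.mulVec_mulVec, Matrix.dotProduct_mulVec, ← Matrix.vecMul_transpose,
        Matrix.vecMul_vecMul, ← Matrix.mul_assoc, ← hM, ← Matrix.dotProduct_mulVec]
    have expand : (β + A *ᵥ η ω) ⬝ᵥ (Sg *ᵥ (β + A *ᵥ η ω))
        = β ⬝ᵥ (Sg *ᵥ β) + b ⬝ᵥ η ω + c ⬝ᵥ η ω + η ω ⬝ᵥ (M *ᵥ η ω) := by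
      rw [Matrix.mulVec_add, dotProduct_add, add_dotProduct,
        add_dotProduct, e3, e4, e5]
      ring
    have rhs : η ω ⬝ᵥ (C *ᵥ η ω) + d ⬝ᵥ η ω + e
        = η ω ⬝ᵥ (vecMulVec a a *ᵥ η ω)
          + (N : ℝ)⁻¹ * (β ⬝ᵥ (Sg *ᵥ β) + b ⬝ᵥ η ω + c ⬝ᵥ η ω + η ω ⬝ᵥ (M *ᵥ η ω)) := by
      rw [hC, hd, he, Matrix.add_mulVec, dotProduct_add, Matrix.smul_mulVec,
        dotProduct_smul, smul_dotProduct, add_dotProduct]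
      simp only [smul_eq_mul]
      ring
    rw [hv, hβv, e1, sq_dot_eq a (η ω), expand, rhs]
  simp only [key]
  have hI1 := int_quad_integrable η hηL2 C
  have hI2 := int_linear_integrable η hηL2 d
  have hI12 : Integrable (fun ω => η ω ⬝ᵥ (C *ᵥ η ω) + d ⬝ᵥ η ω) (ℙ : Measure Ω) := hI1.add hI2
  rw [integral_add hI12 (integrable_const e), integral_add hI1 hI2,
    int_quad η hηL2 hηcov C, int_linear η hηL2 hηcent d, integral_const]
  simp only [probReal_univ, measure_univ, ENNReal.toReal_one, smul_eq_mul, one_mul, add_zero]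
  -- trace computations
  have htrM : Matrix.trace M = Matrix.trace (Sg * G) := by
    rw [hM, Matrix.trace_mul_cycle, hAA, Matrix.trace_mul_comm]
  have htra : a ⬝ᵥ a = Matrix.trace (vecMulVec x x * G) := by
    have h1 : a ⬝ᵥ a = (x ᵥ* A) ⬝ᵥ (Aᵀ *ᵥ x) := by rw [ha, Matrix.mulVec_transpose]
    rw [h1, Matrix.dotProduct_mulVec, Matrix.vecMul_vecMul, hAA, trace_vecMulVec_mul]
  have htraa : Matrix.trace (vecMulVec a a) = a ⬝ᵥ a := by
    simp [Matrix.trace, Matrix.diag, vecMulVec_apply, dotProduct]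
  rw [hC, Matrix.trace_add, Matrix.trace_smul, htrM, htraa, htra, he]
  simp only [smul_eq_mul]
  ring
end

section
/- Let Σ̂, Σ ∈ ℝ^{s×s} be symmetric matrices, β, β̂ ∈ ℝ^{k₀×s} and Q ∈ ℝ^{q×k₀}. Then |tr(Σ̂ β̂^T Q^T Q β̂) − tr(Σ β^T Q^T Q β)| ≤ 2 s ‖Σ̂‖₂ (‖Qβ‖₂ + ‖Qβ̂‖₂) ‖Qβ − Qβ̂‖_F + √s ‖Σ̂ − Σ‖₂ tr(β^T Q^T Q β), where ‖·‖₂ is the spectral norm and ‖·‖_F the Frobenius norm. -/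
open Matrix

/-- Frobenius norm of a real matrix. -/
noncomputable def frobNorm {p r : ℕ} (M : Matrix (Fin p) (Fin r) ℝ) : ℝ :=
  Real.sqrt (∑ i, ∑ j, (M i j) ^ 2)

/-- Spectral (ℓ²-operator) norm of a real matrix. -/
noncomputable def specNorm {p r : ℕ} (M : Matrix (Fin p) (Fin r) ℝ) : ℝ :=
  ‖LinearMap.toContinuousLinearMap (Matrix.toEuclideanLin M)‖

open scoped Matrix.Norms.L2Operator

namespace PluginAux

variable {p r t : ℕ}

lemma specNorm_eq (M : Matrix (Fin p) (Fin r) ℝ) : specNorm M = ‖M‖ := rfl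

lemma specNorm_nonneg (M : Matrix (Fin p) (Fin r) ℝ) : 0 ≤ specNorm M := by
  rw [specNorm_eq]; exact norm_nonneg _

lemma frobNorm_nonneg (M : Matrix (Fin p) (Fin r) ℝ) : 0 ≤ frobNorm M :=
  Real.sqrt_nonneg _

lemma sum_sq_mulVec_le (M : Matrix (Fin p) (Fin r) ℝ) (v : Fin r → ℝ) :
    ∑ i, (M.mulVec v i) ^ 2 ≤ specNorm M ^ 2 * ∑ j, v j ^ 2 := by
  have h := M.l2_opNorm_mulVec ((EuclideanSpace.equiv (Fin r) ℝ).symm v)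
  rw [EuclideanSpace.norm_eq, EuclideanSpace.norm_eq] at h
  simp only [Real.norm_eq_abs, sq_abs] at h
  have h' : Real.sqrt (∑ i, (M.mulVec v i) ^ 2) ≤ specNorm M * Real.sqrt (∑ j, v j ^ 2) := h
  calc ∑ i, (M.mulVec v i) ^ 2
      = Real.sqrt (∑ i, (M.mulVec v i) ^ 2) ^ 2 := (Real.sq_sqrt (by positivity)).symm
    _ ≤ (specNorm M * Real.sqrt (∑ j, v j ^ 2)) ^ 2 :=
        pow_le_pow_left₀ (Real.sqrt_nonneg _) h' 2
    _ = specNorm M ^ 2 * ∑ j, v j ^ 2 := by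
        rw [mul_pow, Real.sq_sqrt (by positivity)]

lemma frob_sq (M : Matrix (Fin p) (Fin r) ℝ) :
    frobNorm M ^ 2 = ∑ i, ∑ j, (M i j) ^ 2 :=
  Real.sq_sqrt (by positivity)

lemma frobNorm_mul_le (M : Matrix (Fin p) (Fin r) ℝ) (N : Matrix (Fin r) (Fin t) ℝ) :
    frobNorm (M * N) ≤ specNorm M * frobNorm N := by
  have key : ∑ i, ∑ j, ((M * N) i j) ^ 2 ≤ specNorm M ^ 2 * ∑ i, ∑ j, (N i j) ^ 2 := by
    calc ∑ i, ∑ j, ((M * N) i j) ^ 2 = ∑ j, ∑ i, ((M * N) i j) ^ 2 := Finset.sum_comm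
      _ ≤ ∑ j : Fin t, specNorm M ^ 2 * ∑ k, (N k j) ^ 2 := by
          refine Finset.sum_le_sum fun j _ => ?_
          have he : ∀ i, (M * N) i j = M.mulVec (fun k => N k j) i := fun i => by
            simp [Matrix.mul_apply, Matrix.mulVec, dotProduct]
          simp_rw [he]
          exact sum_sq_mulVec_le M _
      _ = specNorm M ^ 2 * ∑ i, ∑ j, (N i j) ^ 2 := by
          rw [← Finset.mul_sum, Finset.sum_comm]
  have h1 : specNorm M * frobNorm N
      = Real.sqrt (specNorm M ^ 2 * ∑ i, ∑ j, (N i j) ^ 2) := by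
    rw [Real.sqrt_mul (sq_nonneg _), Real.sqrt_sq (specNorm_nonneg M)]; rfl
  rw [show frobNorm (M * N) = Real.sqrt (∑ i, ∑ j, ((M * N) i j) ^ 2) from rfl, h1]
  exact Real.sqrt_le_sqrt key

lemma frobNorm_transpose (M : Matrix (Fin p) (Fin r) ℝ) : frobNorm Mᵀ = frobNorm M := by
  simp only [frobNorm, Matrix.transpose_apply]
  rw [Finset.sum_comm]

lemma specNorm_transpose (M : Matrix (Fin p) (Fin r) ℝ) : specNorm Mᵀ = specNorm M := by
  have h : Mᵀ = Mᴴ := by ext i j; simp [Matrix.conjTranspose_apply]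
  rw [specNorm_eq, specNorm_eq, h, Matrix.l2_opNorm_conjTranspose]

lemma frobNorm_eq_norm (M : Matrix (Fin p) (Fin r) ℝ) :
    frobNorm M = ‖((WithLp.equiv 2 (Fin p × Fin r → ℝ)).symm
      (fun ij => M ij.1 ij.2) : EuclideanSpace ℝ (Fin p × Fin r))‖ := by
  rw [EuclideanSpace.norm_eq]
  simp only [WithLp.equiv_symm_apply, WithLp.ofLp_toLp, Real.norm_eq_abs, sq_abs, frobNorm]
  rw [Fintype.sum_prod_type]

lemma frobNorm_add_le (X Y : Matrix (Fin p) (Fin r) ℝ) :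
    frobNorm (X + Y) ≤ frobNorm X + frobNorm Y := by
  rw [frobNorm_eq_norm, frobNorm_eq_norm, frobNorm_eq_norm]
  have h : ((WithLp.equiv 2 (Fin p × Fin r → ℝ)).symm
      (fun ij => (X + Y) ij.1 ij.2) : EuclideanSpace ℝ (Fin p × Fin r))
      = (WithLp.equiv 2 (Fin p × Fin r → ℝ)).symm (fun ij => X ij.1 ij.2)
        + (WithLp.equiv 2 (Fin p × Fin r → ℝ)).symm (fun ij => Y ij.1 ij.2) := by
    rfl
  rw [h]
  exact norm_add_le _ _

lemma frobNorm_sub_comm (X Y : Matrix (Fin p) (Fin r) ℝ) :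
    frobNorm (X - Y) = frobNorm (Y - X) := by
  simp only [frobNorm]
  congr 1
  refine Finset.sum_congr rfl fun i _ => Finset.sum_congr rfl fun j _ => ?_
  simp only [Matrix.sub_apply]
  ring

lemma abs_trace_transpose_mul_le (M N : Matrix (Fin p) (Fin r) ℝ) :
    |Matrix.trace (Mᵀ * N)| ≤ frobNorm M * frobNorm N := by
  have ht : Matrix.trace (Mᵀ * N)
      = ∑ x : Fin r × Fin p, M x.2 x.1 * N x.2 x.1 := by
    rw [Fintype.sum_prod_type]
    simp [Matrix.trace, Matrix.diag, Matrix.mul_apply]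
  have hcs := Finset.sum_mul_sq_le_sq_mul_sq Finset.univ
    (fun x : Fin r × Fin p => M x.2 x.1) (fun x : Fin r × Fin p => N x.2 x.1)
  have hM : ∑ x : Fin r × Fin p, (M x.2 x.1) ^ 2 = ∑ i, ∑ j, (M i j) ^ 2 := by
    rw [Fintype.sum_prod_type, Finset.sum_comm]
  have hN : ∑ x : Fin r × Fin p, (N x.2 x.1) ^ 2 = ∑ i, ∑ j, (N i j) ^ 2 := by
    rw [Fintype.sum_prod_type, Finset.sum_comm]
  calc |Matrix.trace (Mᵀ * N)|
      = Real.sqrt ((Matrix.trace (Mᵀ * N)) ^ 2) := (Real.sqrt_sq_eq_abs _).symm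
    _ ≤ Real.sqrt ((∑ i, ∑ j, (M i j) ^ 2) * ∑ i, ∑ j, (N i j) ^ 2) := by
        apply Real.sqrt_le_sqrt
        rw [ht]
        calc (∑ x : Fin r × Fin p, M x.2 x.1 * N x.2 x.1) ^ 2
            ≤ (∑ x : Fin r × Fin p, (M x.2 x.1) ^ 2)
              * ∑ x : Fin r × Fin p, (N x.2 x.1) ^ 2 := hcs
          _ = _ := by rw [hM, hN]
    _ = frobNorm M * frobNorm N := Real.sqrt_mul (by positivity) _

lemma trace_gram_eq (A : Matrix (Fin p) (Fin r) ℝ) :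
    Matrix.trace (Aᵀ * A) = ∑ j, ∑ i, (A i j) ^ 2 := by
  simp [Matrix.trace, Matrix.diag, Matrix.mul_apply, sq]

lemma trace_gram_nonneg (A : Matrix (Fin p) (Fin r) ℝ) :
    0 ≤ Matrix.trace (Aᵀ * A) := by
  rw [trace_gram_eq]; positivity

lemma frobNorm_gram_le_trace (A : Matrix (Fin p) (Fin r) ℝ) :
    frobNorm (Aᵀ * A) ≤ Matrix.trace (Aᵀ * A) := by
  have hkey : ∑ j, ∑ k, ((Aᵀ * A) j k) ^ 2 ≤ (∑ j, ∑ i, (A i j) ^ 2) ^ 2 := by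
    calc ∑ j, ∑ k, ((Aᵀ * A) j k) ^ 2
        ≤ ∑ j, ∑ k, (∑ i, (A i j) ^ 2) * ∑ i, (A i k) ^ 2 := by
          refine Finset.sum_le_sum fun j _ => Finset.sum_le_sum fun k _ => ?_
          have he : (Aᵀ * A) j k = ∑ i, A i j * A i k := by
            simp [Matrix.mul_apply]
          rw [he]
          exact Finset.sum_mul_sq_le_sq_mul_sq _ _ _
      _ = (∑ j, ∑ i, (A i j) ^ 2) ^ 2 := by
          rw [sq, Finset.sum_mul_sum]
  calc frobNorm (Aᵀ * A) = Real.sqrt (∑ j, ∑ k, ((Aᵀ * A) j k) ^ 2) := rfl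
    _ ≤ Real.sqrt ((∑ j, ∑ i, (A i j) ^ 2) ^ 2) := Real.sqrt_le_sqrt hkey
    _ = |∑ j, ∑ i, (A i j) ^ 2| := Real.sqrt_sq_eq_abs _
    _ = Matrix.trace (Aᵀ * A) := by rw [abs_of_nonneg (by positivity), trace_gram_eq]

lemma frobNorm_le_sqrt_specNorm {n : ℕ} (M : Matrix (Fin n) (Fin n) ℝ) :
    frobNorm M ≤ Real.sqrt n * specNorm M := by
  have hone : frobNorm (1 : Matrix (Fin n) (Fin n) ℝ) = Real.sqrt n := by
    unfold frobNorm
    congr 1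
    have he : ∀ i j : Fin n, ((1 : Matrix (Fin n) (Fin n) ℝ) i j) ^ 2
        = if i = j then (1 : ℝ) else 0 := by
      intro i j
      by_cases h : i = j <;> simp [Matrix.one_apply, h]
    simp_rw [he]
    simp
  calc frobNorm M = frobNorm (M * 1) := by rw [mul_one]
    _ ≤ specNorm M * frobNorm (1 : Matrix (Fin n) (Fin n) ℝ) := frobNorm_mul_le M 1
    _ = Real.sqrt n * specNorm M := by rw [hone, mul_comm]

end PluginAux

open PluginAux

/-- Deterministic error bound for the plug-in estimator of `tr(Σ βᵀ Qᵀ Q β)`: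
`|tr(Σ̂ β̂ᵀQᵀQβ̂) − tr(Σ βᵀQᵀQβ)| ≤ 2s ‖Σ̂‖₂ (‖Qβ‖₂ + ‖Qβ̂‖₂) ‖Qβ − Qβ̂‖_F
+ √s ‖Σ̂ − Σ‖₂ tr(βᵀQᵀQβ)`. -/
theorem plugin_trace_estimator_bound
    (s k₀ q : ℕ)
    (Shat Sg : Matrix (Fin s) (Fin s) ℝ) (hShat : Shat.IsSymm) (hSg : Sg.IsSymm)
    (β βhat : Matrix (Fin k₀) (Fin s) ℝ) (Q : Matrix (Fin q) (Fin k₀) ℝ) :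
    |Matrix.trace (Shat * (βhatᵀ * Qᵀ * Q * βhat)) - Matrix.trace (Sg * (βᵀ * Qᵀ * Q * β))|
      ≤ 2 * s * specNorm Shat * (specNorm (Q * β) + specNorm (Q * βhat))
            * frobNorm (Q * β - Q * βhat)
        + Real.sqrt s * specNorm (Shat - Sg) * Matrix.trace (βᵀ * Qᵀ * Q * β) := by
  classical
  set A := Q * β with hAdef
  set B := Q * βhat with hBdef
  have hgA : βᵀ * Qᵀ * Q * β = Aᵀ * A := by
    rw [hAdef, Matrix.transpose_mul, Matrix.mul_assoc, Matrix.mul_assoc]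
  have hgB : βhatᵀ * Qᵀ * Q * βhat = Bᵀ * B := by
    rw [hBdef, Matrix.transpose_mul, Matrix.mul_assoc, Matrix.mul_assoc]
  rw [hgA, hgB]
  have hsplit : Matrix.trace (Shat * (Bᵀ * B)) - Matrix.trace (Sg * (Aᵀ * A))
      = Matrix.trace (Shat * (Bᵀ * B - Aᵀ * A))
        + Matrix.trace ((Shat - Sg) * (Aᵀ * A)) := by
    rw [Matrix.mul_sub, Matrix.sub_mul, Matrix.trace_sub, Matrix.trace_sub]
    ring
  rw [hsplit]
  -- abbreviations
  set a := specNorm A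
  set b := specNorm B
  set c := specNorm Shat
  set e := specNorm (Shat - Sg)
  set d := frobNorm (A - B)
  have ha : 0 ≤ a := specNorm_nonneg _
  have hb : 0 ≤ b := specNorm_nonneg _
  have hc : 0 ≤ c := specNorm_nonneg _
  have he0 : 0 ≤ e := specNorm_nonneg _
  have hd : 0 ≤ d := frobNorm_nonneg _
  -- first term
  have hdecomp : Bᵀ * B - Aᵀ * A = Bᵀ * (B - A) + (B - A)ᵀ * A := by
    rw [Matrix.mul_sub, Matrix.transpose_sub, Matrix.sub_mul]
    abel
  have h2 : frobNorm (Bᵀ * B - Aᵀ * A) ≤ (a + b) * d := by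
    rw [hdecomp]
    have ht1 : frobNorm (Bᵀ * (B - A)) ≤ b * frobNorm (B - A) := by
      calc frobNorm (Bᵀ * (B - A)) ≤ specNorm Bᵀ * frobNorm (B - A) :=
            frobNorm_mul_le _ _
        _ = b * frobNorm (B - A) := by rw [specNorm_transpose]
    have ht2 : frobNorm ((B - A)ᵀ * A) ≤ a * frobNorm (B - A) := by
      have heq : (B - A)ᵀ * A = (Aᵀ * (B - A))ᵀ := by
        rw [Matrix.transpose_mul, Matrix.transpose_transpose]
      calc frobNorm ((B - A)ᵀ * A) = frobNorm (Aᵀ * (B - A)) := by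
            rw [heq, frobNorm_transpose]
        _ ≤ specNorm Aᵀ * frobNorm (B - A) := frobNorm_mul_le _ _
        _ = a * frobNorm (B - A) := by rw [specNorm_transpose]
    calc frobNorm (Bᵀ * (B - A) + (B - A)ᵀ * A)
        ≤ frobNorm (Bᵀ * (B - A)) + frobNorm ((B - A)ᵀ * A) := frobNorm_add_le _ _
      _ ≤ b * frobNorm (B - A) + a * frobNorm (B - A) := add_le_add ht1 ht2
      _ = (a + b) * d := by rw [frobNorm_sub_comm B A]; ring
  have h1 : |Matrix.trace (Shat * (Bᵀ * B - Aᵀ * A))|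
      ≤ frobNorm Shat * frobNorm (Bᵀ * B - Aᵀ * A) := by
    have := abs_trace_transpose_mul_le Shat (Bᵀ * B - Aᵀ * A)
    rwa [hShat.eq] at this
  have h3 : frobNorm Shat ≤ Real.sqrt s * c := frobNorm_le_sqrt_specNorm Shat
  have hsle : Real.sqrt s ≤ 2 * s := by
    have h4 : (s : ℝ) ≤ (s : ℝ) ^ 2 := by
      exact_mod_cast Nat.le_self_pow two_ne_zero s
    have h5 : Real.sqrt s ≤ Real.sqrt ((s : ℝ) ^ 2) := Real.sqrt_le_sqrt h4
    rw [Real.sqrt_sq (Nat.cast_nonneg s)] at h5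
    linarith
  have hT1 : |Matrix.trace (Shat * (Bᵀ * B - Aᵀ * A))|
      ≤ 2 * s * c * (a + b) * d := by
    calc |Matrix.trace (Shat * (Bᵀ * B - Aᵀ * A))|
        ≤ frobNorm Shat * frobNorm (Bᵀ * B - Aᵀ * A) := h1
      _ ≤ (Real.sqrt s * c) * ((a + b) * d) :=
          mul_le_mul h3 h2 (frobNorm_nonneg _)
            (mul_nonneg (Real.sqrt_nonneg _) hc)
      _ ≤ (2 * s * c) * ((a + b) * d) := by
          have : Real.sqrt s * c ≤ 2 * s * c := mul_le_mul_of_nonneg_right hsle hc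
          exact mul_le_mul_of_nonneg_right this
            (mul_nonneg (add_nonneg ha hb) hd)
      _ = 2 * s * c * (a + b) * d := by ring
  -- second term
  have hT2 : |Matrix.trace ((Shat - Sg) * (Aᵀ * A))|
      ≤ Real.sqrt s * e * Matrix.trace (Aᵀ * A) := by
    have hsym : (Shat - Sg)ᵀ = Shat - Sg := by
      rw [Matrix.transpose_sub, hShat.eq, hSg.eq]
    have hcs := abs_trace_transpose_mul_le (Shat - Sg) (Aᵀ * A)
    rw [hsym] at hcs
    calc |Matrix.trace ((Shat - Sg) * (Aᵀ * A))|
        ≤ frobNorm (Shat - Sg) * frobNorm (Aᵀ * A) := hcs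
      _ ≤ (Real.sqrt s * e) * Matrix.trace (Aᵀ * A) :=
          mul_le_mul (frobNorm_le_sqrt_specNorm _) (frobNorm_gram_le_trace A)
            (frobNorm_nonneg _) (mul_nonneg (Real.sqrt_nonneg _) he0)
      _ = Real.sqrt s * e * Matrix.trace (Aᵀ * A) := rfl
  calc |Matrix.trace (Shat * (Bᵀ * B - Aᵀ * A)) + Matrix.trace ((Shat - Sg) * (Aᵀ * A))|
      ≤ |Matrix.trace (Shat * (Bᵀ * B - Aᵀ * A))|
        + |Matrix.trace ((Shat - Sg) * (Aᵀ * A))| := abs_add_le _ _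
    _ ≤ 2 * s * c * (a + b) * d + Real.sqrt s * e * Matrix.trace (Aᵀ * A) :=
        add_le_add hT1 hT2
end

section
/- Let (α_t)_{t∈ℕ} be a positive nonincreasing sequence with α_t → 0, and let c_epr, L > 0 be constants. Suppose m : (0,∞) → ℕ is nondecreasing and satisfies m(B) ≥ B / (c_epr + √(c_epr L / α_{m(B)})) for every budget B > 0. Then m(B) → ∞ as B → ∞. -/
open Filter

/-- If `α_t ↓ 0`, `c_epr, L > 0`, and a nondecreasing map `m : (0,∞) → ℕ` satisfies
`m(B) ≥ B / (c_epr + √(c_epr L / α_{m(B)}))` for every budget `B > 0`,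
then `m(B) → ∞` as `B → ∞`. -/
theorem aetc_exploration_diverges
    (α : ℕ → ℝ) (hαpos : ∀ t, 0 < α t) (hαanti : Antitone α)
    (hα0 : Tendsto α atTop (nhds 0))
    (cepr L : ℝ) (hcepr : 0 < cepr) (hL : 0 < L)
    (m : ℝ → ℕ)
    (hmono : ∀ B₁ B₂ : ℝ, 0 < B₁ → B₁ ≤ B₂ → m B₁ ≤ m B₂)
    (hbound : ∀ B : ℝ, 0 < B →
      B / (cepr + Real.sqrt (cepr * L / α (m B))) ≤ (m B : ℝ)) :
    Tendsto m atTop atTop := by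
  rw [tendsto_atTop]
  intro N
  set D : ℝ := cepr + Real.sqrt (cepr * L / α N) with hD
  have hDpos : 0 < D := lt_of_lt_of_le hcepr (le_add_of_nonneg_right (Real.sqrt_nonneg _))
  filter_upwards [eventually_ge_atTop (max 1 ((N : ℝ) * D + D))] with B hB
  have hB1 : (1 : ℝ) ≤ B := le_trans (le_max_left _ _) hB
  have hBpos : 0 < B := lt_of_lt_of_le one_pos hB1
  by_contra hlt
  push_neg at hlt
  have hmN : m B ≤ N := hlt.le
  have hα : α N ≤ α (m B) := hαanti hmN
  have hden : cepr + Real.sqrt (cepr * L / α (m B)) ≤ D := by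
    apply add_le_add le_rfl
    apply Real.sqrt_le_sqrt
    exact div_le_div_of_nonneg_left (by positivity) (hαpos _) hα
  have hdenpos : 0 < cepr + Real.sqrt (cepr * L / α (m B)) :=
    lt_of_lt_of_le hcepr (le_add_of_nonneg_right (Real.sqrt_nonneg _))
  have h1 : B / D ≤ (m B : ℝ) :=
    le_trans (div_le_div_of_nonneg_left hBpos.le hdenpos hden) (hbound B hBpos)
  have h2 : (N : ℝ) + 1 ≤ B / D := by
    rw [le_div_iff₀ hDpos]
    have : ((N : ℝ) + 1) * D = (N : ℝ) * D + D := by ring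
    rw [this]
    exact le_trans (le_max_right _ _) hB
  have : (N : ℝ) + 1 ≤ (m B : ℝ) := le_trans h2 h1
  have : (N : ℝ) < (m B : ℝ) := lt_of_lt_of_le (by linarith) this
  exact absurd (Nat.cast_lt.mp this) (not_lt.mpr hmN)
end
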